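/- Let F: [0,1] × ℝ² → ℝ be continuous and globally Lipschitz in (y,z) uniformly in x, with Lipschitz constant k, i.e. |F(x,y,z) − F(x,ỹ,z̃)| ≤ k(|y − ỹ| + |z − z̃|) for all x ∈ [0,1] and y, ỹ, z, z̃ ∈ ℝ. If k < ( sup_{x∈[0,1]} ∫₀¹ ( |K(x,y)| + |∂ₓK(x,y)| ) dy )^{−1}, then for every A, B ∈ ℝ the boundary value problem Lu = F(x,u,u'), u(0) = A, u(1) = B has a unique solution u ∈ C¹([0,1]). -/

import Mathlib

open Set MeasureTheory intervalIntegral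

/-- A function `u ∈ C¹([0,1])` is a solution of the boundary value problem
`Lu = F(x,u,u')`, `u(0) = A`, `u(1) = B` for the second order operator `L` with
generalized drift (with data `σ` and `Σ = Sig`). -/
def IsBVPSolutionF (σ Sig : ℝ → ℝ) (a b A B : ℝ) (F : ℝ → ℝ → ℝ → ℝ) (u : ℝ → ℝ) :
    Prop :=
  u a = A ∧ u b = B ∧
  ∃ (d : ℝ → ℝ) (x₁ : ℝ),
    ContinuousOn d (Set.Icc a b) ∧
    (∀ x ∈ Set.Icc a b, HasDerivWithinAt u (d x) (Set.Icc a b) x) ∧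
    ∀ x ∈ Set.Icc a b,
      d x = Real.exp (-(Sig x)) *
        (2 * (∫ y in a..x, Real.exp (Sig y) * F y (u y) (d y) / (σ y) ^ 2) + x₁)

/-- The kernel `K(x,y)`. -/
noncomputable def Kker (σ Sig : ℝ → ℝ) (x y : ℝ) : ℝ :=
  (if y ≤ x then (2 * Real.exp (Sig y) / (σ y) ^ 2) *
      (∫ z in y..x, Real.exp (-(Sig z))) else 0)
  - 2 * ((∫ r in (0 : ℝ)..x, Real.exp (-(Sig r))) /
        (∫ r in (0 : ℝ)..1, Real.exp (-(Sig r))))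
      * (Real.exp (Sig y) / (σ y) ^ 2) * (∫ z in y..1, Real.exp (-(Sig z)))

/-- The partial derivative `∂ₓK(x,y)` of the kernel `K` in `x`. -/
noncomputable def Kx (σ Sig : ℝ → ℝ) (x y : ℝ) : ℝ :=
  2 * Real.exp (Sig y - Sig x) / (σ y) ^ 2 *
    ((if y ≤ x then 1 else 0)
      - (∫ z in y..(1 : ℝ), Real.exp (-(Sig z))) /
        (∫ z in (0 : ℝ)..1, Real.exp (-(Sig z))))

namespace BVP10


noncomputable def eps (Sig : ℝ → ℝ) (x : ℝ) : ℝ := Real.exp (-(Sig x))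

noncomputable def Efun (Sig : ℝ → ℝ) (x : ℝ) : ℝ := ∫ t in (0:ℝ)..x, eps Sig t

noncomputable def Cc (Sig : ℝ → ℝ) : ℝ := Efun Sig 1

noncomputable def gfun (σ Sig h : ℝ → ℝ) (y : ℝ) : ℝ := Real.exp (Sig y) * h y / σ y ^ 2

noncomputable def Gfun (σ Sig h : ℝ → ℝ) (x : ℝ) : ℝ := ∫ y in (0:ℝ)..x, gfun σ Sig h y

noncomputable def Jfun (σ Sig h : ℝ → ℝ) : ℝ :=
  ∫ y in (0:ℝ)..1, gfun σ Sig h y * (Cc Sig - Efun Sig y)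

variable {σ Sig h h₁ h₂ : ℝ → ℝ}

lemma continuous_eps (hSig : Continuous Sig) : Continuous (eps Sig) :=
  Real.continuous_exp.comp hSig.neg

lemma eps_pos (Sig : ℝ → ℝ) (x : ℝ) : 0 < eps Sig x := Real.exp_pos _

lemma hasDerivAt_Efun (hSig : Continuous Sig) (x : ℝ) :
    HasDerivAt (Efun Sig) (eps Sig x) x :=
  integral_hasDerivAt_right ((continuous_eps hSig).intervalIntegrable _ _)
    ((continuous_eps hSig).stronglyMeasurableAtFilter _ _) (continuous_eps hSig).continuousAt

lemma continuous_Efun (hSig : Continuous Sig) : Continuous (Efun Sig) :=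
  continuous_iff_continuousAt.2 fun x => (hasDerivAt_Efun hSig x).continuousAt

lemma Efun_zero (Sig : ℝ → ℝ) : Efun Sig 0 = 0 := integral_same

lemma Cc_pos (hSig : Continuous Sig) : 0 < Cc Sig :=
  intervalIntegral_pos_of_pos ((continuous_eps hSig).intervalIntegrable _ _)
    (eps_pos Sig) one_pos

lemma Efun_interval (hSig : Continuous Sig) (y b : ℝ) :
    (∫ z in y..b, Real.exp (-(Sig z))) = Efun Sig b - Efun Sig y := by
  rw [Efun, Efun]
  exact (integral_interval_sub_left ((continuous_eps hSig).intervalIntegrable _ _)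
    ((continuous_eps hSig).intervalIntegrable _ _)).symm

lemma continuous_gfun (hσ : Continuous σ) (hSig : Continuous Sig) (hσpos : ∀ x, 0 < σ x)
    (hh : Continuous h) : Continuous (gfun σ Sig h) :=
  ((Real.continuous_exp.comp hSig).mul hh).div (hσ.pow 2)
    (fun y => pow_ne_zero _ (hσpos y).ne')

lemma hasDerivAt_Gfun (hσ : Continuous σ) (hSig : Continuous Sig) (hσpos : ∀ x, 0 < σ x)
    (hh : Continuous h) (x : ℝ) :
    HasDerivAt (Gfun σ Sig h) (gfun σ Sig h x) x :=
  integral_hasDerivAt_right ((continuous_gfun hσ hSig hσpos hh).intervalIntegrable _ _)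
    ((continuous_gfun hσ hSig hσpos hh).stronglyMeasurableAtFilter _ _)
    (continuous_gfun hσ hSig hσpos hh).continuousAt

lemma continuous_Gfun (hσ : Continuous σ) (hSig : Continuous Sig) (hσpos : ∀ x, 0 < σ x)
    (hh : Continuous h) : Continuous (Gfun σ Sig h) :=
  continuous_iff_continuousAt.2 fun x => (hasDerivAt_Gfun hσ hSig hσpos hh x).continuousAt

/-- integration by parts for the primitive pair. -/
lemma parts (hσ : Continuous σ) (hSig : Continuous Sig) (hσpos : ∀ x, 0 < σ x)
    (hh : Continuous h) (x : ℝ) :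
    ∫ t in (0:ℝ)..x, eps Sig t * Gfun σ Sig h t
      = Efun Sig x * Gfun σ Sig h x - ∫ t in (0:ℝ)..x, Efun Sig t * gfun σ Sig h t := by
  have hcont1 : Continuous fun t => eps Sig t * Gfun σ Sig h t :=
    (continuous_eps hSig).mul (continuous_Gfun hσ hSig hσpos hh)
  have hcont2 : Continuous fun t => Efun Sig t * gfun σ Sig h t :=
    (continuous_Efun hSig).mul (continuous_gfun hσ hSig hσpos hh)
  have key : ∫ t in (0:ℝ)..x,
      (eps Sig t * Gfun σ Sig h t + Efun Sig t * gfun σ Sig h t)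
      = Efun Sig x * Gfun σ Sig h x - Efun Sig 0 * Gfun σ Sig h 0 := by
    apply integral_eq_sub_of_hasDerivAt
    · intro t _
      exact (hasDerivAt_Efun hSig t).mul (hasDerivAt_Gfun hσ hSig hσpos hh t)
    · exact (hcont1.add hcont2).intervalIntegrable _ _
  rw [integral_add (hcont1.intervalIntegrable _ _) (hcont2.intervalIntegrable _ _)] at key
  rw [Efun_zero] at key
  simp only [zero_mul, sub_zero] at key
  linarith

lemma intervalIntegrable_ite {c : ℝ → ℝ} (hc : Continuous c) (x a b : ℝ) :
    IntervalIntegrable (fun y => if y ≤ x then c y else 0) volume a b := by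
  have heq : (fun y => if y ≤ x then c y else 0) = (Iic x).indicator c := by
    funext y; simp [Set.indicator_apply, Set.mem_Iic]
  rw [heq, intervalIntegrable_iff]
  exact (intervalIntegrable_iff.mp (hc.intervalIntegrable a b)).indicator measurableSet_Iic

lemma integral_ite_split {c : ℝ → ℝ} (hc : Continuous c) {x : ℝ} (hx0 : 0 ≤ x) (hx1 : x ≤ 1) :
    (∫ y in (0:ℝ)..1, if y ≤ x then c y else 0) = ∫ y in (0:ℝ)..x, c y := by
  have h1 : (∫ y in (0:ℝ)..x, if y ≤ x then c y else 0) = ∫ y in (0:ℝ)..x, c y := by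
    apply integral_congr
    intro y hy
    rw [uIcc_of_le hx0] at hy
    simp only [if_pos hy.2]
  have h2 : (∫ y in x..(1:ℝ), if y ≤ x then c y else 0) = 0 := by
    have h2' : (∫ y in x..(1:ℝ), if y ≤ x then c y else 0) = ∫ _y in x..(1:ℝ), (0:ℝ) := by
      apply intervalIntegral.integral_congr_ae
      filter_upwards with y hy
      rw [uIoc_of_le hx1] at hy
      exact if_neg (not_le.mpr hy.1)
    rw [h2', intervalIntegral.integral_zero]
  rw [← integral_add_adjacent_intervals (intervalIntegrable_ite hc x 0 x)
    (intervalIntegrable_ite hc x x 1), h1, h2, add_zero]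


variable {σ Sig h h₁ h₂ : ℝ → ℝ}

lemma int01_eq_Cc (Sig : ℝ → ℝ) :
    (∫ z in (0:ℝ)..1, Real.exp (-(Sig z))) = Cc Sig := rfl

lemma int0x_eq_Efun (Sig : ℝ → ℝ) (x : ℝ) :
    (∫ r in (0:ℝ)..x, Real.exp (-(Sig r))) = Efun Sig x := rfl

lemma inty1_eq (hSig : Continuous Sig) (y : ℝ) :
    (∫ z in y..(1:ℝ), Real.exp (-(Sig z))) = Cc Sig - Efun Sig y :=
  Efun_interval hSig y 1

lemma Kx_mul (hSig : Continuous Sig) (hσpos : ∀ y, 0 < σ y) (hC : Cc Sig ≠ 0)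
    (x y : ℝ) :
    Kx σ Sig x y * h y
      = (if y ≤ x then 2 * eps Sig x * gfun σ Sig h y else 0)
        - 2 * eps Sig x * (gfun σ Sig h y * (Cc Sig - Efun Sig y)) / Cc Sig := by
  rw [Kx, int01_eq_Cc, inty1_eq hSig y, Real.exp_sub]
  simp only [gfun, eps, Real.exp_neg]
  have hσy : (σ y) ^ 2 ≠ 0 := pow_ne_zero _ (hσpos y).ne'
  have hex : Real.exp (Sig x) ≠ 0 := Real.exp_ne_zero _
  split_ifs with hyx
  · field_simp
  · field_simp
    ring

lemma Kker_mul (hSig : Continuous Sig) (hσpos : ∀ y, 0 < σ y) (hC : Cc Sig ≠ 0)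
    (x y : ℝ) :
    Kker σ Sig x y * h y
      = (if y ≤ x then 2 * (Efun Sig x - Efun Sig y) * gfun σ Sig h y else 0)
        - 2 * Efun Sig x / Cc Sig * (gfun σ Sig h y * (Cc Sig - Efun Sig y)) := by
  rw [Kker, int01_eq_Cc, Efun_interval hSig y x, inty1_eq hSig y, int0x_eq_Efun]
  simp only [gfun]
  have hσy : (σ y) ^ 2 ≠ 0 := pow_ne_zero _ (hσpos y).ne'
  split_ifs with hyx
  · field_simp
  · field_simp
    ring

lemma integral_Kx (hσ : Continuous σ) (hSig : Continuous Sig) (hσpos : ∀ y, 0 < σ y)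
    (hh : Continuous h) (hC : Cc Sig ≠ 0) {x : ℝ} (hx : x ∈ Icc (0:ℝ) 1) :
    (∫ y in (0:ℝ)..1, Kx σ Sig x y * h y)
      = eps Sig x * (2 * Gfun σ Sig h x - 2 * Jfun σ Sig h / Cc Sig) := by
  have hgc : Continuous (gfun σ Sig h) := continuous_gfun hσ hSig hσpos hh
  have hc1 : Continuous fun y => 2 * eps Sig x * gfun σ Sig h y :=
    continuous_const.mul hgc
  have hc2 : Continuous fun y =>
      2 * eps Sig x * (gfun σ Sig h y * (Cc Sig - Efun Sig y)) / Cc Sig :=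
    ((continuous_const.mul (hgc.mul (continuous_const.sub (continuous_Efun hSig))))).div_const _
  rw [integral_congr (g := fun y =>
      (if y ≤ x then 2 * eps Sig x * gfun σ Sig h y else 0)
        - 2 * eps Sig x * (gfun σ Sig h y * (Cc Sig - Efun Sig y)) / Cc Sig)
    (fun y _ => Kx_mul hSig hσpos hC x y)]
  rw [integral_sub (intervalIntegrable_ite hc1 x 0 1) (hc2.intervalIntegrable _ _)]
  rw [integral_ite_split hc1 hx.1 hx.2]
  rw [intervalIntegral.integral_const_mul]
  have : (∫ y in (0:ℝ)..1,
      2 * eps Sig x * (gfun σ Sig h y * (Cc Sig - Efun Sig y)) / Cc Sig)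
      = 2 * eps Sig x / Cc Sig * Jfun σ Sig h := by
    rw [show (fun y => 2 * eps Sig x * (gfun σ Sig h y * (Cc Sig - Efun Sig y)) / Cc Sig)
        = fun y => (2 * eps Sig x / Cc Sig) * (gfun σ Sig h y * (Cc Sig - Efun Sig y))
      from funext fun y => by ring]
    rw [intervalIntegral.integral_const_mul]
    rfl
  rw [this]
  show 2 * eps Sig x * Gfun σ Sig h x - _ = _
  ring

lemma integral_Kker (hσ : Continuous σ) (hSig : Continuous Sig) (hσpos : ∀ y, 0 < σ y)
    (hh : Continuous h) (hC : Cc Sig ≠ 0) {x : ℝ} (hx : x ∈ Icc (0:ℝ) 1) :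
    (∫ y in (0:ℝ)..1, Kker σ Sig x y * h y)
      = 2 * Efun Sig x * Gfun σ Sig h x
        - 2 * (∫ y in (0:ℝ)..x, Efun Sig y * gfun σ Sig h y)
        - 2 * Efun Sig x / Cc Sig * Jfun σ Sig h := by
  have hgc : Continuous (gfun σ Sig h) := continuous_gfun hσ hSig hσpos hh
  have hEc : Continuous (Efun Sig) := continuous_Efun hSig
  have hc1 : Continuous fun y => 2 * (Efun Sig x - Efun Sig y) * gfun σ Sig h y :=
    (continuous_const.mul (continuous_const.sub hEc)).mul hgc
  have hc2 : Continuous fun y =>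
      2 * Efun Sig x / Cc Sig * (gfun σ Sig h y * (Cc Sig - Efun Sig y)) :=
    continuous_const.mul (hgc.mul (continuous_const.sub hEc))
  rw [integral_congr (g := fun y =>
      (if y ≤ x then 2 * (Efun Sig x - Efun Sig y) * gfun σ Sig h y else 0)
        - 2 * Efun Sig x / Cc Sig * (gfun σ Sig h y * (Cc Sig - Efun Sig y)))
    (fun y _ => Kker_mul hSig hσpos hC x y)]
  rw [integral_sub (intervalIntegrable_ite hc1 x 0 1) (hc2.intervalIntegrable _ _)]
  rw [integral_ite_split hc1 hx.1 hx.2]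
  rw [intervalIntegral.integral_const_mul, Jfun]
  have : (∫ y in (0:ℝ)..x, 2 * (Efun Sig x - Efun Sig y) * gfun σ Sig h y)
      = 2 * Efun Sig x * Gfun σ Sig h x
        - 2 * (∫ y in (0:ℝ)..x, Efun Sig y * gfun σ Sig h y) := by
    rw [show (fun y => 2 * (Efun Sig x - Efun Sig y) * gfun σ Sig h y)
        = fun y => (2 * Efun Sig x) * gfun σ Sig h y - 2 * (Efun Sig y * gfun σ Sig h y)
      from funext fun y => by ring]
    rw [integral_sub ((continuous_const.fun_mul hgc).intervalIntegrable _ _)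
      ((continuous_const.fun_mul (hEc.fun_mul hgc)).intervalIntegrable _ _),
      intervalIntegral.integral_const_mul, intervalIntegral.integral_const_mul, Gfun]
  rw [this]

noncomputable def TD (σ Sig : ℝ → ℝ) (A B : ℝ) (h : ℝ → ℝ) (x : ℝ) : ℝ :=
  eps Sig x * ((B - A) / Cc Sig + 2 * Gfun σ Sig h x - 2 * Jfun σ Sig h / Cc Sig)

noncomputable def TU (σ Sig : ℝ → ℝ) (A B : ℝ) (h : ℝ → ℝ) (x : ℝ) : ℝ :=
  A + ∫ t in (0:ℝ)..x, TD σ Sig A B h t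

variable {A B : ℝ}

lemma continuous_TD (hσ : Continuous σ) (hSig : Continuous Sig) (hσpos : ∀ y, 0 < σ y)
    (hh : Continuous h) : Continuous (TD σ Sig A B h) :=
  (continuous_eps hSig).mul
    ((continuous_const.add (continuous_const.mul (continuous_Gfun hσ hSig hσpos hh))).sub
      continuous_const)

lemma hasDerivAt_TU (hσ : Continuous σ) (hSig : Continuous Sig) (hσpos : ∀ y, 0 < σ y)
    (hh : Continuous h) (x : ℝ) :
    HasDerivAt (TU σ Sig A B h) (TD σ Sig A B h x) x := by
  have hTD := continuous_TD (A := A) (B := B) hσ hSig hσpos hh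
  exact (integral_hasDerivAt_right (hTD.intervalIntegrable _ _)
    (hTD.stronglyMeasurableAtFilter _ _) hTD.continuousAt).const_add A

lemma TU_zero : TU σ Sig A B h 0 = A := by
  simp [TU]

lemma int_eps_eq_Efun (Sig : ℝ → ℝ) (x : ℝ) : (∫ t in (0:ℝ)..x, eps Sig t) = Efun Sig x := rfl

lemma integral_epsG_eq_J (hσ : Continuous σ) (hSig : Continuous Sig) (hσpos : ∀ y, 0 < σ y)
    (hh : Continuous h) :
    (∫ t in (0:ℝ)..1, eps Sig t * Gfun σ Sig h t) = Jfun σ Sig h := by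
  rw [parts hσ hSig hσpos hh 1, Jfun]
  have hgc : Continuous (gfun σ Sig h) := continuous_gfun hσ hSig hσpos hh
  have : (∫ y in (0:ℝ)..1, gfun σ Sig h y * (Cc Sig - Efun Sig y))
      = Cc Sig * Gfun σ Sig h 1 - ∫ y in (0:ℝ)..1, Efun Sig y * gfun σ Sig h y := by
    rw [show (fun y => gfun σ Sig h y * (Cc Sig - Efun Sig y))
        = fun y => Cc Sig * gfun σ Sig h y - Efun Sig y * gfun σ Sig h y
      from funext fun y => by ring]
    rw [integral_sub ((continuous_const.fun_mul hgc).intervalIntegrable _ _)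
      (((continuous_Efun hSig).fun_mul hgc).intervalIntegrable _ _), intervalIntegral.integral_const_mul, Gfun]
  rw [this, Cc]

lemma TU_one (hσ : Continuous σ) (hSig : Continuous Sig) (hσpos : ∀ y, 0 < σ y)
    (hh : Continuous h) (hC : Cc Sig ≠ 0) : TU σ Sig A B h 1 = B := by
  rw [TU]
  have : (∫ t in (0:ℝ)..1, TD σ Sig A B h t) = B - A := by
    rw [show TD σ Sig A B h
        = fun t => ((B - A) / Cc Sig - 2 * Jfun σ Sig h / Cc Sig) * eps Sig t
            + 2 * (eps Sig t * Gfun σ Sig h t)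
      from funext fun t => by rw [TD]; ring]
    rw [integral_add ((continuous_const.fun_mul (continuous_eps hSig)).intervalIntegrable _ _)
      ((continuous_const.fun_mul ((continuous_eps hSig).fun_mul
        (continuous_Gfun hσ hSig hσpos hh))).intervalIntegrable _ _),
      intervalIntegral.integral_const_mul, intervalIntegral.integral_const_mul, integral_epsG_eq_J hσ hSig hσpos hh,
      int_eps_eq_Efun, ← Cc]
    field_simp
    ring
  rw [this]; ring

lemma gfun_sub (σ Sig h₁ h₂ : ℝ → ℝ) (y : ℝ) :
    gfun σ Sig (fun t => h₁ t - h₂ t) y = gfun σ Sig h₁ y - gfun σ Sig h₂ y := by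
  simp only [gfun]; ring

lemma Gfun_sub (hσ : Continuous σ) (hSig : Continuous Sig) (hσpos : ∀ y, 0 < σ y)
    (hh₁ : Continuous h₁) (hh₂ : Continuous h₂) (x : ℝ) :
    Gfun σ Sig (fun t => h₁ t - h₂ t) x = Gfun σ Sig h₁ x - Gfun σ Sig h₂ x := by
  simp only [Gfun, gfun_sub]
  exact integral_sub ((continuous_gfun hσ hSig hσpos hh₁).intervalIntegrable _ _)
    ((continuous_gfun hσ hSig hσpos hh₂).intervalIntegrable _ _)

lemma Jfun_sub (hσ : Continuous σ) (hSig : Continuous Sig) (hσpos : ∀ y, 0 < σ y)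
    (hh₁ : Continuous h₁) (hh₂ : Continuous h₂) :
    Jfun σ Sig (fun t => h₁ t - h₂ t) = Jfun σ Sig h₁ - Jfun σ Sig h₂ := by
  simp only [Jfun, gfun_sub, sub_mul]
  exact integral_sub
    (((continuous_gfun hσ hSig hσpos hh₁).mul
      (continuous_const.sub (continuous_Efun hSig))).intervalIntegrable _ _)
    (((continuous_gfun hσ hSig hσpos hh₂).mul
      (continuous_const.sub (continuous_Efun hSig))).intervalIntegrable _ _)

lemma TD_sub_fun (hσ : Continuous σ) (hSig : Continuous Sig) (hσpos : ∀ y, 0 < σ y)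
    (hh₁ : Continuous h₁) (hh₂ : Continuous h₂) (t : ℝ) :
    TD σ Sig A B h₁ t - TD σ Sig A B h₂ t
      = eps Sig t * (2 * Gfun σ Sig (fun s => h₁ s - h₂ s) t
          - 2 * Jfun σ Sig (fun s => h₁ s - h₂ s) / Cc Sig) := by
  rw [Gfun_sub hσ hSig hσpos hh₁ hh₂, Jfun_sub hσ hSig hσpos hh₁ hh₂]
  simp only [TD]; ring

lemma TD_sub_eq (hσ : Continuous σ) (hSig : Continuous Sig) (hσpos : ∀ y, 0 < σ y)
    (hh₁ : Continuous h₁) (hh₂ : Continuous h₂) (hC : Cc Sig ≠ 0)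
    {x : ℝ} (hx : x ∈ Icc (0:ℝ) 1) :
    TD σ Sig A B h₁ x - TD σ Sig A B h₂ x
      = ∫ y in (0:ℝ)..1, Kx σ Sig x y * (h₁ y - h₂ y) := by
  rw [TD_sub_fun hσ hSig hσpos hh₁ hh₂,
    integral_Kx hσ hSig hσpos (hh₁.fun_sub hh₂) hC hx]

lemma TU_integral_repr (hσ : Continuous σ) (hSig : Continuous Sig) (hσpos : ∀ y, 0 < σ y)
    (hh : Continuous h) (hC : Cc Sig ≠ 0) {x : ℝ} (hx : x ∈ Icc (0:ℝ) 1) :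
    (∫ t in (0:ℝ)..x, eps Sig t * (2 * Gfun σ Sig h t - 2 * Jfun σ Sig h / Cc Sig))
      = ∫ y in (0:ℝ)..1, Kker σ Sig x y * h y := by
  rw [integral_Kker hσ hSig hσpos hh hC hx]
  rw [show (fun t => eps Sig t * (2 * Gfun σ Sig h t - 2 * Jfun σ Sig h / Cc Sig))
      = fun t => 2 * (eps Sig t * Gfun σ Sig h t)
          + (-(2 * Jfun σ Sig h / Cc Sig)) * eps Sig t
    from funext fun t => by ring]
  rw [integral_add
    ((continuous_const.fun_mul ((continuous_eps hSig).fun_mul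
      (continuous_Gfun hσ hSig hσpos hh))).intervalIntegrable _ _)
    ((continuous_const.fun_mul (continuous_eps hSig)).intervalIntegrable _ _),
    intervalIntegral.integral_const_mul, intervalIntegral.integral_const_mul, parts hσ hSig hσpos hh x, int_eps_eq_Efun]
  ring

lemma TU_sub_eq (hσ : Continuous σ) (hSig : Continuous Sig) (hσpos : ∀ y, 0 < σ y)
    (hh₁ : Continuous h₁) (hh₂ : Continuous h₂) (hC : Cc Sig ≠ 0)
    {x : ℝ} (hx : x ∈ Icc (0:ℝ) 1) :
    TU σ Sig A B h₁ x - TU σ Sig A B h₂ x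
      = ∫ y in (0:ℝ)..1, Kker σ Sig x y * (h₁ y - h₂ y) := by
  have step : TU σ Sig A B h₁ x - TU σ Sig A B h₂ x
      = ∫ t in (0:ℝ)..x, (TD σ Sig A B h₁ t - TD σ Sig A B h₂ t) := by
    rw [integral_sub ((continuous_TD hσ hSig hσpos hh₁).intervalIntegrable _ _)
      ((continuous_TD hσ hSig hσpos hh₂).intervalIntegrable _ _)]
    simp only [TU]; ring
  rw [step, integral_congr (fun t _ => TD_sub_fun hσ hSig hσpos hh₁ hh₂ t),
    TU_integral_repr hσ hSig hσpos (hh₁.fun_sub hh₂) hC hx]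

lemma intervalIntegrable_Kker (hσ : Continuous σ) (hSig : Continuous Sig)
    (hσpos : ∀ y, 0 < σ y) (x : ℝ) :
    IntervalIntegrable (fun y => Kker σ Sig x y) volume 0 1 := by
  have hbase : Continuous fun y => 2 * Real.exp (Sig y) / σ y ^ 2 :=
    (continuous_const.mul (Real.continuous_exp.comp hSig)).div (hσ.pow 2)
      (fun y => pow_ne_zero _ (hσpos y).ne')
  have hbase2 : Continuous fun y => Real.exp (Sig y) / σ y ^ 2 :=
    (Real.continuous_exp.comp hSig).div (hσ.pow 2) (fun y => pow_ne_zero _ (hσpos y).ne')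
  have heq : (fun y => Kker σ Sig x y)
      = fun y => (if y ≤ x then (2 * Real.exp (Sig y) / σ y ^ 2)
            * (Efun Sig x - Efun Sig y) else 0)
        - 2 * (Efun Sig x / Cc Sig) * (Real.exp (Sig y) / σ y ^ 2)
            * (Cc Sig - Efun Sig y) := by
    funext y
    rw [Kker, int01_eq_Cc, Efun_interval hSig y x, inty1_eq hSig y, int0x_eq_Efun]
  rw [heq]
  exact (intervalIntegrable_ite (hbase.mul (continuous_const.sub (continuous_Efun hSig))) x 0 1).sub
    (((continuous_const.mul hbase2).mul
      (continuous_const.sub (continuous_Efun hSig))).intervalIntegrable _ _)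

lemma intervalIntegrable_Kx (hσ : Continuous σ) (hSig : Continuous Sig)
    (hσpos : ∀ y, 0 < σ y) (x : ℝ) :
    IntervalIntegrable (fun y => Kx σ Sig x y) volume 0 1 := by
  have hbase : Continuous fun y => 2 * Real.exp (Sig y - Sig x) / σ y ^ 2 :=
    (continuous_const.mul (Real.continuous_exp.comp (hSig.sub continuous_const))).div
      (hσ.pow 2) (fun y => pow_ne_zero _ (hσpos y).ne')
  have heq : (fun y => Kx σ Sig x y)
      = fun y => (if y ≤ x then 2 * Real.exp (Sig y - Sig x) / σ y ^ 2 else 0)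
        - (2 * Real.exp (Sig y - Sig x) / σ y ^ 2)
            * ((Cc Sig - Efun Sig y) / Cc Sig) := by
    funext y
    rw [Kx, int01_eq_Cc, inty1_eq hSig y]
    split_ifs <;> ring
  rw [heq]
  exact (intervalIntegrable_ite hbase x 0 1).sub
    ((hbase.mul ((continuous_const.sub (continuous_Efun hSig)).div_const _)).intervalIntegrable _ _)

lemma abs_integral_bound {f w : ℝ → ℝ} (hf : IntervalIntegrable f volume 0 1)
    (hw : Continuous w) {D : ℝ} (hD : ∀ y, |w y| ≤ D) :
    |∫ y in (0:ℝ)..1, f y * w y| ≤ (∫ y in (0:ℝ)..1, |f y|) * D := by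
  refine (abs_integral_le_integral_abs zero_le_one).trans ?_
  rw [← intervalIntegral.integral_mul_const]
  refine integral_mono_on zero_le_one ((hf.mul_continuousOn hw.continuousOn).abs)
    (hf.abs.mul_const D) ?_
  intro y _
  rw [abs_mul]
  exact mul_le_mul_of_nonneg_left (hD y) (abs_nonneg _)

end BVP10

open BVP10

/-- if `F` is continuous and globally Lipschitz in `(y,z)` uniformly in
`x ∈ [0,1]` with Lipschitz constant
`k < ( sup_{x∈[0,1]} ∫₀¹ ( |K(x,y)| + |∂ₓK(x,y)| ) dy )⁻¹`, then for every `A, B ∈ ℝ`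
the boundary value problem `Lu = F(x,u,u')`, `u(0) = A`, `u(1) = B` has a unique
solution `u ∈ C¹([0,1])`. -/
theorem bvp_exists_unique_solution_small_lipschitz
    (σ Sig : ℝ → ℝ) (hσ : Continuous σ) (hSig : Continuous Sig)
    (hσpos : ∀ x, 0 < σ x)
    (F : ℝ → ℝ → ℝ → ℝ)
    (hF : ContinuousOn (fun p : ℝ × ℝ × ℝ => F p.1 p.2.1 p.2.2)
      {p : ℝ × ℝ × ℝ | p.1 ∈ Icc (0 : ℝ) 1})
    (k : ℝ)
    (hLip : ∀ x ∈ Icc (0 : ℝ) 1, ∀ y z ytilde ztilde : ℝ,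
      |F x y z - F x ytilde ztilde| ≤ k * (|y - ytilde| + |z - ztilde|))
    (hk : k < (⨆ x : Icc (0 : ℝ) 1,
      ∫ y in (0 : ℝ)..1, (|Kker σ Sig x y| + |Kx σ Sig x y|))⁻¹)
    (A B : ℝ) :
    ∃ u : ℝ → ℝ, IsBVPSolutionF σ Sig 0 1 A B F u ∧
      ∀ v : ℝ → ℝ, IsBVPSolutionF σ Sig 0 1 A B F v → EqOn v u (Icc (0 : ℝ) 1) := by
  classical
  have hC0 : 0 < Cc Sig := Cc_pos hSig
  have hC : Cc Sig ≠ 0 := hC0.ne'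
  -- k is nonnegative
  have hk0 : 0 ≤ k := by
    by_contra hneg
    push_neg at hneg
    have h0 := hLip 0 (by constructor <;> norm_num) 0 0 1 0
    have : |(0:ℝ) - 1| + |(0:ℝ) - 0| = 1 := by norm_num
    rw [this, mul_one] at h0
    exact absurd (lt_of_le_of_lt h0 hneg) (not_lt.mpr (abs_nonneg _))
  obtain ⟨S, hSdef⟩ : ∃ S, S = ⨆ x : Icc (0:ℝ) 1,
      ∫ y in (0:ℝ)..1, (|Kker σ Sig x y| + |Kx σ Sig x y|) := ⟨_, rfl⟩
  rw [← hSdef] at hk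
  have hSpos : 0 < S := inv_pos.mp (lt_of_le_of_lt hk0 hk)
  have hbdd : BddAbove (Set.range fun x : Icc (0:ℝ) 1 =>
      ∫ y in (0:ℝ)..1, (|Kker σ Sig x y| + |Kx σ Sig x y|)) := by
    by_contra hnb
    have h0 := Real.iSup_of_not_bddAbove hnb
    rw [← hSdef] at h0
    exact absurd h0 hSpos.ne'
  have hSle : ∀ x : Icc (0:ℝ) 1,
      (∫ y in (0:ℝ)..1, (|Kker σ Sig x y| + |Kx σ Sig x y|)) ≤ S := by
    intro x; rw [hSdef]; exact le_ciSup hbdd x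
  have hkS : k * S < 1 := by
    have h1 : k < 1 / S := by rwa [one_div]
    calc k * S < (1/S) * S := by
          exact mul_lt_mul_of_pos_right h1 hSpos
      _ = 1 := by field_simp
  -- the function space and the map Φ
  let bar : C(Icc (0:ℝ) 1, ℝ) → ℝ → ℝ := fun ψ y => ψ (projIcc 0 1 zero_le_one y)
  have hbar_cont : ∀ ψ, Continuous (bar ψ) := fun ψ => ψ.continuous.comp continuous_projIcc
  have hbar_eq : ∀ (ψ : C(Icc (0:ℝ) 1, ℝ)) (y : ℝ) (hy : y ∈ Icc (0:ℝ) 1),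
      bar ψ y = ψ ⟨y, hy⟩ := by
    intro ψ y hy
    show ψ _ = ψ _
    rw [projIcc_of_mem]
  have hΦcont : ∀ ψ : C(Icc (0:ℝ) 1, ℝ), Continuous fun t : Icc (0:ℝ) 1 =>
      F t (TU σ Sig A B (bar ψ) t) (TD σ Sig A B (bar ψ) t) := by
    intro ψ
    have hu : Continuous (TU σ Sig A B (bar ψ)) :=
      continuous_iff_continuousAt.2 fun x =>
        (hasDerivAt_TU hσ hSig hσpos (hbar_cont ψ) x).continuousAt
    have hd : Continuous (TD σ Sig A B (bar ψ)) := continuous_TD hσ hSig hσpos (hbar_cont ψ)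
    have hin : Continuous fun t : ℝ => (t, (TU σ Sig A B (bar ψ) t, TD σ Sig A B (bar ψ) t)) :=
      continuous_id.prodMk (hu.prodMk hd)
    exact (hF.comp hin.continuousOn (fun t ht => ht)).restrict
  let Φ : C(Icc (0:ℝ) 1, ℝ) → C(Icc (0:ℝ) 1, ℝ) := fun ψ =>
    ⟨fun t => F t (TU σ Sig A B (bar ψ) t) (TD σ Sig A B (bar ψ) t), hΦcont ψ⟩
  -- contraction estimate
  have key : ∀ ψ₁ ψ₂, dist (Φ ψ₁) (Φ ψ₂) ≤ (k*S) * dist ψ₁ ψ₂ := by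
    intro ψ₁ ψ₂
    have hD0 : 0 ≤ dist ψ₁ ψ₂ := dist_nonneg
    rw [ContinuousMap.dist_le (by positivity)]
    intro t
    have hwD : ∀ y, |bar ψ₁ y - bar ψ₂ y| ≤ dist ψ₁ ψ₂ := by
      intro y
      have h := ContinuousMap.dist_apply_le_dist (f := ψ₁) (g := ψ₂) (projIcc 0 1 zero_le_one y)
      rwa [Real.dist_eq] at h
    have h1 : dist (Φ ψ₁ t) (Φ ψ₂ t)
        ≤ k * (|TU σ Sig A B (bar ψ₁) t - TU σ Sig A B (bar ψ₂) t|
            + |TD σ Sig A B (bar ψ₁) t - TD σ Sig A B (bar ψ₂) t|) := by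
      show dist (F t (TU σ Sig A B (bar ψ₁) t) (TD σ Sig A B (bar ψ₁) t))
          (F t (TU σ Sig A B (bar ψ₂) t) (TD σ Sig A B (bar ψ₂) t)) ≤ _
      rw [Real.dist_eq]
      exact hLip t t.2 _ _ _ _
    have h2 : |TU σ Sig A B (bar ψ₁) t - TU σ Sig A B (bar ψ₂) t|
        ≤ (∫ y in (0:ℝ)..1, |Kker σ Sig t y|) * dist ψ₁ ψ₂ := by
      rw [TU_sub_eq hσ hSig hσpos (hbar_cont ψ₁) (hbar_cont ψ₂) hC t.2]
      exact abs_integral_bound (intervalIntegrable_Kker hσ hSig hσpos t)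
        ((hbar_cont ψ₁).sub (hbar_cont ψ₂)) hwD
    have h3 : |TD σ Sig A B (bar ψ₁) t - TD σ Sig A B (bar ψ₂) t|
        ≤ (∫ y in (0:ℝ)..1, |Kx σ Sig t y|) * dist ψ₁ ψ₂ := by
      rw [TD_sub_eq hσ hSig hσpos (hbar_cont ψ₁) (hbar_cont ψ₂) hC t.2]
      exact abs_integral_bound (intervalIntegrable_Kx hσ hSig hσpos t)
        ((hbar_cont ψ₁).sub (hbar_cont ψ₂)) hwD
    have h4 : (∫ y in (0:ℝ)..1, |Kker σ Sig t y|) + (∫ y in (0:ℝ)..1, |Kx σ Sig t y|)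
        = ∫ y in (0:ℝ)..1, (|Kker σ Sig t y| + |Kx σ Sig t y|) := by
      rw [integral_add ((intervalIntegrable_Kker hσ hSig hσpos (t:ℝ)).abs)
        ((intervalIntegrable_Kx hσ hSig hσpos (t:ℝ)).abs)]
    calc dist (Φ ψ₁ t) (Φ ψ₂ t)
        ≤ k * (|TU σ Sig A B (bar ψ₁) t - TU σ Sig A B (bar ψ₂) t|
            + |TD σ Sig A B (bar ψ₁) t - TD σ Sig A B (bar ψ₂) t|) := h1
      _ ≤ k * ((∫ y in (0:ℝ)..1, |Kker σ Sig t y|) * dist ψ₁ ψ₂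
            + (∫ y in (0:ℝ)..1, |Kx σ Sig t y|) * dist ψ₁ ψ₂) :=
          mul_le_mul_of_nonneg_left (add_le_add h2 h3) hk0
      _ = k * ((∫ y in (0:ℝ)..1, (|Kker σ Sig t y| + |Kx σ Sig t y|)) * dist ψ₁ ψ₂) := by
          rw [← h4]; ring
      _ ≤ k * (S * dist ψ₁ ψ₂) := by
          apply mul_le_mul_of_nonneg_left _ hk0
          exact mul_le_mul_of_nonneg_right (hSle t) hD0
      _ = (k*S) * dist ψ₁ ψ₂ := by ring
  have hcontr : ContractingWith ⟨k*S, by positivity⟩ Φ := by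
    constructor
    · exact_mod_cast hkS
    · exact LipschitzWith.of_dist_le_mul key
  set ψs := ContractingWith.fixedPoint Φ hcontr with hψs
  have hfp : Function.IsFixedPt Φ ψs := hcontr.fixedPoint_isFixedPt
  set hb : ℝ → ℝ := bar ψs with hhb
  have hbc : Continuous hb := hbar_cont ψs
  set u : ℝ → ℝ := TU σ Sig A B hb with hu
  set d : ℝ → ℝ := TD σ Sig A B hb with hd
  have hfix_eq : ∀ y (hy : y ∈ Icc (0:ℝ) 1), hb y = F y (u y) (d y) := by
    intro y hy
    have h := ContinuousMap.congr_fun hfp ⟨y, hy⟩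
    rw [hhb, hbar_eq ψs y hy]
    exact h.symm
  have hGint : ∀ x ∈ Icc (0:ℝ) 1,
      (∫ y in (0:ℝ)..x, Real.exp (Sig y) * F y (u y) (d y) / σ y ^ 2)
        = Gfun σ Sig hb x := by
    intro x hx
    rw [Gfun]
    apply integral_congr
    intro y hy
    rw [uIcc_of_le hx.1] at hy
    have hy1 : y ∈ Icc (0:ℝ) 1 := ⟨hy.1, hy.2.trans hx.2⟩
    rw [gfun, hfix_eq y hy1]
  refine ⟨u, ⟨TU_zero, TU_one hσ hSig hσpos hbc hC, d,
    (B-A)/Cc Sig - 2*Jfun σ Sig hb/Cc Sig,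
    (continuous_TD hσ hSig hσpos hbc).continuousOn,
    fun x _ => (hasDerivAt_TU hσ hSig hσpos hbc x).hasDerivWithinAt, ?_⟩, ?_⟩
  · intro x hx
    rw [hGint x hx]
    show TD σ Sig A B hb x = _
    rw [TD]
    simp only [eps]
    ring
  · -- uniqueness
    rintro v ⟨hv0, hv1, dv, x₁', hdvc, hdvd, hdveq⟩
    have hvc : ContinuousOn v (Icc (0:ℝ) 1) := fun x hx => (hdvd x hx).continuousWithinAt
    have hhic : Continuous fun t : Icc (0:ℝ) 1 => F t (v t) (dv t) := by
      have hin : ContinuousOn (fun t : ℝ => (t, (v t, dv t))) (Icc (0:ℝ) 1) :=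
        continuousOn_id.prodMk (hvc.prodMk hdvc)
      exact (hF.comp hin (fun t ht => ht)).restrict
    set ψv : C(Icc (0:ℝ) 1, ℝ) := ⟨fun t => F t (v t) (dv t), hhic⟩ with hψv
    set hbv : ℝ → ℝ := bar ψv with hhbv
    have hbvc : Continuous hbv := hbar_cont ψv
    have hbv_eq : ∀ y (hy : y ∈ Icc (0:ℝ) 1), hbv y = F y (v y) (dv y) := by
      intro y hy
      rw [hhbv, hbar_eq ψv y hy]
      rfl
    have hGv : ∀ x ∈ Icc (0:ℝ) 1,
        (∫ y in (0:ℝ)..x, Real.exp (Sig y) * F y (v y) (dv y) / σ y ^ 2)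
          = Gfun σ Sig hbv x := by
      intro x hx
      rw [Gfun]
      apply integral_congr
      intro y hy
      rw [uIcc_of_le hx.1] at hy
      have hy1 : y ∈ Icc (0:ℝ) 1 := ⟨hy.1, hy.2.trans hx.2⟩
      rw [gfun, hbv_eq y hy1]
    have hdveq' : ∀ x ∈ Icc (0:ℝ) 1, dv x = eps Sig x * (2 * Gfun σ Sig hbv x + x₁') := by
      intro x hx
      rw [eps, hdveq x hx, hGv x hx]
    have hftc : ∀ x ∈ Icc (0:ℝ) 1, (∫ t in (0:ℝ)..x, dv t) = v x - v 0 := by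
      intro x hx
      apply integral_eq_sub_of_hasDeriv_right_of_le hx.1
        (hvc.mono (Icc_subset_Icc le_rfl hx.2))
      · intro t ht
        have ht1 : t ∈ Icc (0:ℝ) 1 := ⟨ht.1.le, (ht.2.le).trans hx.2⟩
        have h1 : HasDerivAt v (dv t) t :=
          (hdvd t ht1).hasDerivAt (Icc_mem_nhds ht.1 (lt_of_lt_of_le ht.2 hx.2))
        exact h1.hasDerivWithinAt
      · exact (hdvc.mono (by rw [uIcc_of_le hx.1]; exact Icc_subset_Icc le_rfl hx.2)).intervalIntegrable
    have hx₁ : x₁' = (B-A)/Cc Sig - 2*Jfun σ Sig hbv/Cc Sig := by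
      have h10 : (∫ t in (0:ℝ)..1, dv t) = B - A := by
        rw [hftc 1 ⟨zero_le_one, le_rfl⟩, hv1, hv0]
      have h11 : (∫ t in (0:ℝ)..1, dv t) = 2 * Jfun σ Sig hbv + x₁' * Cc Sig := by
        rw [integral_congr (g := fun t => 2*(eps Sig t * Gfun σ Sig hbv t) + x₁' * eps Sig t)
          (fun t ht => by
            rw [uIcc_of_le zero_le_one] at ht
            rw [hdveq' t ht]; ring)]
        rw [integral_add
          ((continuous_const.fun_mul ((continuous_eps hSig).fun_mul
            (continuous_Gfun hσ hSig hσpos hbvc))).intervalIntegrable _ _)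
          ((continuous_const.fun_mul (continuous_eps hSig)).intervalIntegrable _ _),
          intervalIntegral.integral_const_mul, intervalIntegral.integral_const_mul, integral_epsG_eq_J hσ hSig hσpos hbvc,
          int_eps_eq_Efun, ← Cc]
      have h12 : B - A = 2 * Jfun σ Sig hbv + x₁' * Cc Sig := h10 ▸ h11
      field_simp
      linarith
    have hdvTD : ∀ x ∈ Icc (0:ℝ) 1, dv x = TD σ Sig A B hbv x := by
      intro x hx
      rw [hdveq' x hx, TD, hx₁]
      ring
    have hvTU : ∀ x ∈ Icc (0:ℝ) 1, v x = TU σ Sig A B hbv x := by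
      intro x hx
      have hcg : (∫ t in (0:ℝ)..x, TD σ Sig A B hbv t) = ∫ t in (0:ℝ)..x, dv t := by
        apply integral_congr
        intro t ht
        rw [uIcc_of_le hx.1] at ht
        exact (hdvTD t ⟨ht.1, ht.2.trans hx.2⟩).symm
      rw [TU, hcg, hftc x hx, hv0]
      ring
    have hψvfix : Function.IsFixedPt Φ ψv := by
      apply ContinuousMap.ext
      intro t
      show F t (TU σ Sig A B (bar ψv) t) (TD σ Sig A B (bar ψv) t) = F t (v t) (dv t)
      rw [← hvTU t t.2, ← hdvTD t t.2]
    have hψveq : ψv = ψs := hcontr.fixedPoint_unique hψvfix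
    intro x hx
    rw [hvTU x hx, hu, hhb]
    show TU σ Sig A B (bar ψv) x = TU σ Sig A B (bar ψs) x
    rw [hψveq]
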